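/- In the surjection operad over Z/2, let U = (1,3,1,2) + (1,2,3,2) + (1,2,3,1) + (3,2,3,1) + (3,1,2,1) ∈ X(3)_1. Then U is a cycle: dU = 0. -/

import Mathlib

/- The surjection operad over Z/2 (Berger–Fresse).  Elements of X(r)_d are Z/2-linear
combinations of non-degenerate surjections u : {1,…,r+d} → {1,…,r}, encoded as lists;
degenerate (two equal adjacent entries) or non-surjective lists represent 0. -/

noncomputable section

/-- Formal Z/2-linear combinations of sequences. -/
abbrev El := List ℕ →₀ ZMod 2

/-- Non-degenerate: no two equal adjacent entries. -/
def Nondeg (u : List ℕ) : Prop := List.Chain' (· ≠ ·) u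

instance : DecidablePred Nondeg := fun u => by unfold Nondeg List.Chain'; infer_instance

/-- `u` is a surjection onto {1,…,r}. -/
def IsSurj (r : ℕ) (u : List ℕ) : Prop :=
  (∀ k < r, (k + 1) ∈ u) ∧ ∀ x ∈ u, 0 < x ∧ x ≤ r

instance (r : ℕ) : DecidablePred (IsSurj r) := fun u => by unfold IsSurj; infer_instance

/-- The basis element of X(r) given by `u`, or 0 if degenerate/non-surjective. -/
def gen (r : ℕ) (u : List ℕ) : El :=
  if Nondeg u ∧ IsSurj r u then Finsupp.single u 1 else 0

/-- The differential: delete one entry at a time (signs trivial mod 2). -/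
def diffOf (r : ℕ) (u : List ℕ) : El :=
  ∑ i ∈ Finset.range u.length, gen r (u.eraseIdx i)

/-- The differential on X(r), extended linearly. -/
def D (r : ℕ) (x : El) : El := x.sum fun u c => c • diffOf r u

/-- All order-preserving splittings of `v` into `n` overlapping consecutive blocks. -/
def splits : ℕ → List ℕ → List (List (List ℕ))
  | 0, _ => []
  | 1, v => [[v]]
  | n + 2, v =>
      (List.range v.length).flatMap fun i =>
        (splits (n + 1) (v.drop i)).map fun rest => (v.take (i + 1)) :: rest

/-- Substitute the successive occurrences of `k` in a list by the successive blocks. -/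
def substAux (k : ℕ) : List ℕ → List (List ℕ) → List ℕ
  | [], _ => []
  | x :: xs, bs =>
      if x = k then bs.headD [] ++ substAux k xs bs.tail else x :: substAux k xs bs

/-- Operadic composition `u ∘ₖ v` in the surjection operad, for `u ∈ X(r)`, `v ∈ X(s)`:
entries of `u` greater than `k` are increased by `s − 1`, entries of `v` by `k − 1`,
and the occurrences of `k` in `u` are replaced by the blocks of all splittings of `v`. -/
def comp (r s k : ℕ) (u v : List ℕ) : El :=
  let u' := u.map fun x => if k < x then x + s - 1 else x
  let v' := v.map (· + (k - 1))
  ((splits (u.count k) v').map fun bs => gen (r + s - 1) (substAux k u' bs)).sum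

end

/- STATEMENT 6: U = (1,3,1,2) + (1,2,3,2) + (1,2,3,1) + (3,2,3,1) + (3,1,2,1) ∈ X(3)₁
is a cycle: dU = 0. -/

noncomputable def U : El :=
  Finsupp.single [1, 3, 1, 2] 1 + Finsupp.single [1, 2, 3, 2] 1 +
    Finsupp.single [1, 2, 3, 1] 1 + Finsupp.single [3, 2, 3, 1] 1 +
    Finsupp.single [3, 1, 2, 1] 1

lemma D_add (r : ℕ) (x y : El) : D r (x + y) = D r x + D r y := by
  unfold D
  apply Finsupp.sum_add_index <;> intros <;> simp [add_smul]

lemma D_single (r : ℕ) (u : List ℕ) : D r (Finsupp.single u 1) = diffOf r u := by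
  unfold D
  rw [Finsupp.sum_single_index] <;> simp

lemma cancel (l : List ℕ) : (Finsupp.single l (1:ZMod 2)) + Finsupp.single l 1 = 0 := by
  rw [← Finsupp.single_add]
  have : (1:ZMod 2)+1 = 0 := by decide
  rw [this, Finsupp.single_zero]

theorem U_is_cycle : D 3 U = 0 := by
  unfold U
  rw [D_add, D_add, D_add, D_add, D_single, D_single, D_single, D_single, D_single]
  unfold diffOf
  simp (config := {decide := true}) only [Finset.sum_range_succ, Finset.sum_range_zero, List.length_cons, List.length_nil, gen, List.eraseIdx, if_true, if_false, add_zero, zero_add]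
  have h1 : (∀ k < 3, k + 1 = 3 ∨ k = 0 ∨ k + 1 = 2) := by decide
  have h2 : (∀ k < 3, k = 0 ∨ k + 1 = 3 ∨ k + 1 = 2) := by decide
  have h3 : ¬(∀ k < 3, k = 0 ∨ k + 1 = 3 ∨ k = 0) := by decide
  have h4 : ¬(∀ k < 3, k + 1 = 2 ∨ k + 1 = 3 ∨ k + 1 = 2) := by decide
  have h5 : (∀ k < 3, k = 0 ∨ k + 1 = 2 ∨ k + 1 = 3) := by decide
  have h6 : (∀ k < 3, k + 1 = 2 ∨ k + 1 = 3 ∨ k = 0) := by decide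
  have h7 : ¬(∀ k < 3, k = 0 ∨ k + 1 = 2 ∨ k = 0) := by decide
  have h8 : (∀ k < 3, k + 1 = 3 ∨ k + 1 = 2 ∨ k = 0) := by decide
  have h9 : ¬(∀ k < 3, k + 1 = 3 ∨ k + 1 = 2 ∨ k + 1 = 3) := by decide
  have h10 : (∀ k < 3, k + 1 = 3 ∨ k = 0 ∨ k + 1 = 2) := by decide
  have c1 := cancel [3,1,2]
  have c2 := cancel [1,3,2]
  have c3 := cancel [1,2,3]
  have c4 := cancel [2,3,1]
  have c5 := cancel [3,2,1]
  linear_combination (norm := abel) c1 + c2 + c3 + c4 + c5
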